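/- arXiv:1805.02596 — 5 statements merged into one kernel-verified Lean document; each statement's English description precedes it below -/
import Mathlib

section
/- If a point x of a subshift X is periodic with minimal period k, then some subword of x of length k does not overlap itself nontrivially (i.e., no proper nonempty suffix of the word equals a prefix of it). -/
/-- A word overlaps itself nontrivially: some proper nonempty suffix equals a prefix. -/
def OverlapsSelfNontrivially {A : Type*} (w : List A) : Prop :=
  ∃ l : ℕ, 0 < l ∧ l < w.length ∧ w.drop (w.length - l) = w.take l

/-- If `x` is periodic with minimal period `k`, some subword of `x` of length `k`
does not overlap itself nontrivially. -/
theorem stmt2 {A : Type*} (x : ℤ → A) (k : ℕ) (hk : 0 < k)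
    (hper : ∀ n : ℤ, x (n + k) = x n)
    (hmin : ∀ m : ℕ, 0 < m → (∀ n : ℤ, x (n + m) = x n) → k ≤ m) :
    ∃ i : ℤ, ¬ OverlapsSelfNontrivially (List.ofFn fun j : Fin k => x (i + (j : ℕ))) := by
  classical
  by_contra hcon
  push_neg at hcon
  -- x is invariant under all integer multiples of k
  have hmul : ∀ (n t : ℤ), x (n + k * t) = x n := by
    intro n t
    induction t using Int.induction_on with
    | zero => simp
    | succ t ih => rw [mul_add, mul_one, ← add_assoc]; rw [hper]; exact ih
    | pred t ih =>
        have h := hper (n + k * (-(t:ℤ) - 1))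
        have e1 : n + (k:ℤ) * (-(t:ℤ) - 1) + k = n + k * (-(t:ℤ)) := by ring
        rw [e1] at h
        rw [← h]; exact ih
  -- every letter appears in the window [0, k)
  have hex : ∀ n : ℤ, ∃ j : ℕ, j < k ∧ x (j : ℤ) = x n := by
    intro n
    refine ⟨(n % k).toNat, ?_, ?_⟩
    · have h1 : 0 ≤ n % (k : ℤ) := Int.emod_nonneg n (by exact_mod_cast hk.ne')
      have h2 : n % (k : ℤ) < k := Int.emod_lt_of_pos n (by exact_mod_cast hk)
      omega
    · have h1 : 0 ≤ n % (k : ℤ) := Int.emod_nonneg n (by exact_mod_cast hk.ne')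
      rw [Int.toNat_of_nonneg h1]
      have : n = n % k + k * (n / k) := by have := Int.emod_add_mul_ediv n k; linarith
      conv_rhs => rw [this]
      exact (hmul _ _).symm
  -- encode letters by first occurrence
  set e : ℤ → ℕ := fun n => Nat.find (hex n) with he
  have espec : ∀ n : ℤ, x ((e n : ℕ) : ℤ) = x n := fun n => (Nat.find_spec (hex n)).2
  have efwd : ∀ a b : ℤ, x a = x b → e a = e b := by
    intro a b hab
    apply le_antisymm
    · exact Nat.find_min' (hex a) ⟨(Nat.find_spec (hex b)).1, (Nat.find_spec (hex b)).2.trans hab.symm⟩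
    · exact Nat.find_min' (hex b) ⟨(Nat.find_spec (hex a)).1, (Nat.find_spec (hex a)).2.trans hab⟩
  have ebwd : ∀ a b : ℤ, e a = e b → x a = x b := by
    intro a b hab
    rw [← espec a, ← espec b, hab]
  -- the shifted sequences
  set Y : ℤ → ℕ → ℕ := fun q d => e (q + d) with hY
  have Ymul : ∀ (q t : ℤ), Y (q + k * t) = Y q := by
    intro q t
    funext d
    exact efwd _ _ (by rw [add_right_comm]; exact hmul _ _)
  -- pick lexicographically minimal shift
  have hne : (Finset.univ : Finset (Fin k)).Nonempty := ⟨⟨0, hk⟩, Finset.mem_univ _⟩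
  obtain ⟨i0, -, hmin'⟩ := Finset.exists_min_image Finset.univ
    (fun j : Fin k => toLex (Y (j : ℕ))) hne
  set p : ℤ := ((i0 : ℕ) : ℤ) with hp
  have Ymin : ∀ q : ℤ, toLex (Y p) ≤ toLex (Y q) := by
    intro q
    have h1 : 0 ≤ q % (k : ℤ) := Int.emod_nonneg q (by exact_mod_cast hk.ne')
    have h2 : q % (k : ℤ) < k := Int.emod_lt_of_pos q (by exact_mod_cast hk)
    have hlt : (q % (k : ℤ)).toNat < k := by omega
    have : Y q = Y (((q % (k : ℤ)).toNat : ℕ) : ℤ) := by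
      have hq : q = ((q % (k : ℤ)).toNat : ℤ) + k * (q / k) := by
        rw [Int.toNat_of_nonneg h1]
        have := Int.emod_add_mul_ediv q k
        linarith
      conv_lhs => rw [hq]
      exact Ymul _ _
    rw [this]
    exact hmin' ⟨_, hlt⟩ (Finset.mem_univ _)
  -- the word at p overlaps itself: get a border of length l
  obtain ⟨l, hl0, hlk, hborder⟩ := hcon p
  rw [List.length_ofFn] at hlk
  simp only [List.length_ofFn] at hborder
  -- pointwise form of the border
  have hb : ∀ j : ℕ, j < l → x (p + ((k - l + j : ℕ) : ℤ)) = x (p + (j : ℕ)) := by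
    intro j hj
    have hjlen : j < ((List.ofFn fun j : Fin k => x (p + (j : ℕ))).drop (k - l)).length := by
      simp only [List.length_drop, List.length_ofFn]
      omega
    have := List.getElem_of_eq hborder hjlen
    simp only [List.getElem_drop, List.getElem_take, List.getElem_ofFn] at this
    simpa using this
  -- rewrite via periodicity: prefix of length l equals x on [p-l, p)
  have hb' : ∀ j : ℕ, j < l → x (p - l + j) = x (p + j) := by
    intro j hj
    have h1 : ((k - l + j : ℕ) : ℤ) = (k : ℤ) - l + j := by
      push_cast [Nat.cast_sub hlk.le]; ring
    have h2 : x (p - l + j) = x (p + ((k : ℤ) - l + j)) := by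
      have := hper (p - l + j)
      rw [← this]; ring_nf
    rw [h2, ← h1]
    exact hb j hj
  -- structural facts about Y
  have s1 : ∀ d : ℕ, d < l → Y (p - l) d = Y p d := fun d hd => efwd _ _ (hb' d hd)
  have s2 : ∀ d : ℕ, Y (p - l) (l + d) = Y p d := by
    intro d; apply efwd; congr 1; push_cast; ring
  have s3 : ∀ d : ℕ, Y p (l + d) = Y (p + l) d := by
    intro d; apply efwd; congr 1; push_cast; ring
  -- key: Y p is not lex-smaller than Y (p + l)
  have hnlt : ¬ (toLex (Y p) < toLex (Y (p + l))) := by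
    intro hlt
    obtain ⟨d, hagree, hd⟩ := hlt
    have hbad : toLex (Y (p - l)) < toLex (Y p) := by
      refine ⟨l + d, ?_, ?_⟩
      · intro j hj
        rcases lt_or_ge j l with hjl | hjl
        · exact s1 j hjl
        · obtain ⟨e', rfl⟩ : ∃ e', j = l + e' := ⟨j - l, by omega⟩
          have he' : e' < d := by omega
          show Y (p - l) (l + e') = Y p (l + e')
          rw [s2 e', s3 e']
          exact hagree e' he'
      · show Y (p - l) (l + d) < Y p (l + d)
        rw [s2 d, s3 d]
        exact hd
    exact absurd (lt_of_le_of_lt (Ymin (p - l)) hbad) (lt_irrefl _)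
  have heq : toLex (Y p) = toLex (Y (p + l)) :=
    le_antisymm (Ymin (p + l)) (not_lt.mp hnlt)
  have hYeq : Y p = Y (p + l) := heq
  have heq' : ∀ d : ℕ, e (p + d) = e (p + l + d) := fun d => congrFun hYeq d
  -- conclude x has period l, contradicting minimality
  have hperl : ∀ n : ℤ, x (n + l) = x n := by
    intro n
    have h1 : 0 ≤ (n - p) % (k : ℤ) := Int.emod_nonneg _ (by exact_mod_cast hk.ne')
    set d : ℤ := (n - p) % k with hd
    set t : ℤ := (n - p) / k with ht
    have hn : n = p + d.toNat + k * t := by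
      rw [Int.toNat_of_nonneg h1]
      have := Int.emod_add_mul_ediv (n - p) k
      linarith
    have key : x (p + (d.toNat : ℕ)) = x (p + l + (d.toNat : ℕ)) :=
      ebwd _ _ (heq' d.toNat)
    calc x (n + l) = x (p + l + d.toNat + k * t) := by rw [hn]; ring_nf
      _ = x (p + l + d.toNat) := hmul _ _
      _ = x (p + d.toNat) := key.symm
      _ = x (p + d.toNat + k * t) := (hmul _ _).symm
      _ = x n := by rw [hn]
  exact absurd (hmin l hl0 hperl) (not_le.mpr hlk)
end

section
/- In a transitive sofic shift, for every n ∈ ℕ there exists a synchronizing word M of length at least n which does not overlap itself nontrivially. -/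
def shift {A : Type*} (x : ℤ → A) : ℤ → A := fun n => x (n + 1)

def OccursIn {A : Type*} (w : List A) (x : ℤ → A) : Prop :=
  ∃ i : ℤ, ∀ j : Fin w.length, x (i + (j : ℕ)) = w.get j

def InLanguage {A : Type*} (X : Set (ℤ → A)) (w : List A) : Prop :=
  ∃ x ∈ X, OccursIn w x

def Synchronizing {A : Type*} (X : Set (ℤ → A)) (w : List A) : Prop :=
  InLanguage X w ∧ ∀ u v : List A, InLanguage X (u ++ w) → InLanguage X (w ++ v) →
    InLanguage X (u ++ w ++ v)

namespace StmtAux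


variable {A : Type*}

/-- the window word of a sequence -/
def win (y : ℤ → A) (i : ℤ) (m : ℕ) : List A := List.ofFn fun j : Fin m => y (i + (j : ℕ))

@[simp] lemma win_length (y : ℤ → A) (i : ℤ) (m : ℕ) : (win y i m).length = m := by
  simp [win]

lemma win_getElem (y : ℤ → A) (i : ℤ) (m : ℕ) (j : ℕ) (hj : j < (win y i m).length) :
    (win y i m)[j] = y (i + (j : ℕ)) := by
  simp [win]

lemma occursIn_win (y : ℤ → A) (i : ℤ) (m : ℕ) : OccursIn (win y i m) y := by
  refine ⟨i, fun j => ?_⟩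
  rw [List.get_eq_getElem, win_getElem]

lemma inLanguage_win {X : Set (ℤ → A)} {y : ℤ → A} (hy : y ∈ X) (i : ℤ) (m : ℕ) :
    InLanguage X (win y i m) := ⟨y, hy, occursIn_win y i m⟩

lemma occursIn_take {w : List A} {x : ℤ → A} (h : OccursIn w x) (k : ℕ) :
    OccursIn (w.take k) x := by
  obtain ⟨i, hi⟩ := h
  refine ⟨i, fun j => ?_⟩
  have hj : (j : ℕ) < w.length := lt_of_lt_of_le j.2 (by simp)
  have := hi ⟨j, hj⟩
  simpa [List.get_eq_getElem, List.getElem_take] using this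

lemma occursIn_drop {w : List A} {x : ℤ → A} (h : OccursIn w x) (k : ℕ) :
    OccursIn (w.drop k) x := by
  obtain ⟨i, hi⟩ := h
  refine ⟨i + (k : ℕ), fun j => ?_⟩
  have hj : k + (j : ℕ) < w.length := by
    have := j.2; simp [List.length_drop] at this; omega
  have := hi ⟨k + j, hj⟩
  simp only [List.get_eq_getElem, List.getElem_drop]
  simp only [List.get_eq_getElem] at this
  rw [← this]
  congr 1
  push_cast
  ring

lemma inLanguage_take {X : Set (ℤ → A)} {w : List A} (h : InLanguage X w) (k : ℕ) :
    InLanguage X (w.take k) := by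
  obtain ⟨x, hx, ho⟩ := h; exact ⟨x, hx, occursIn_take ho k⟩

lemma inLanguage_drop {X : Set (ℤ → A)} {w : List A} (h : InLanguage X w) (k : ℕ) :
    InLanguage X (w.drop k) := by
  obtain ⟨x, hx, ho⟩ := h; exact ⟨x, hx, occursIn_drop ho k⟩

lemma inLanguage_append_left {X : Set (ℤ → A)} {u v : List A} (h : InLanguage X (u ++ v)) :
    InLanguage X u := by
  have := inLanguage_take h u.length
  simpa [List.take_left] using this

lemma inLanguage_append_right {X : Set (ℤ → A)} {u v : List A} (h : InLanguage X (u ++ v)) :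
    InLanguage X v := by
  have := inLanguage_drop h u.length
  simpa [List.drop_left] using this

lemma sync_extend {X : Set (ℤ → A)} {w α β : List A} (hw : Synchronizing X w)
    (h : InLanguage X (α ++ w ++ β)) : Synchronizing X (α ++ w ++ β) := by
  refine ⟨h, fun u v hu hv => ?_⟩
  have h1 : InLanguage X ((u ++ α) ++ w) := by
    have : u ++ (α ++ w ++ β) = ((u ++ α) ++ w) ++ β := by simp [List.append_assoc]
    rw [this] at hu
    exact inLanguage_append_left hu
  have h2 : InLanguage X (w ++ (β ++ v)) := by
    have : (α ++ w ++ β) ++ v = α ++ (w ++ (β ++ v)) := by simp [List.append_assoc]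
    rw [this] at hv
    exact inLanguage_append_right hv
  have h3 := hw.2 (u ++ α) (β ++ v) h1 h2
  have : (u ++ α) ++ w ++ (β ++ v) = u ++ (α ++ w ++ β) ++ v := by simp [List.append_assoc]
  rwa [this] at h3



variable {A : Type*}

lemma per_mul {y : ℤ → A} {p : ℕ} (hper : ∀ n : ℤ, y (n + (p : ℤ)) = y n) :
    ∀ (k : ℤ) (n : ℤ), y (n + (p : ℤ) * k) = y n := by
  have hper' : ∀ n : ℤ, y (n - (p : ℤ)) = y n := by
    intro n
    have := hper (n - p)
    simp at this
    exact this.symm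
  intro k
  induction k using Int.induction_on with
  | zero => simp
  | succ k ih =>
      intro n
      have : n + (p : ℤ) * (k + 1) = (n + (p : ℤ) * k) + p := by ring
      rw [this, hper, ih]
  | pred k ih =>
      intro n
      have : n + (p : ℤ) * (-(k : ℤ) - 1) = (n + (p : ℤ) * (-k)) - p := by ring
      rw [this, hper', ih]

lemma ykey {y : ℤ → A} {p : ℕ} (hper : ∀ n : ℤ, y (n + (p : ℤ)) = y n)
    {a b : ℤ} (h : a % (p : ℤ) = b % (p : ℤ)) : y a = y b := by
  have hd : (p : ℤ) ∣ a - b := Int.ModEq.dvd (Int.ModEq.symm h)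
  obtain ⟨k, hk⟩ := hd
  have : a = b + (p : ℤ) * k := by linarith
  rw [this, per_mul hper]

/-- Existence of a "Lyndon phase": a phase lam such that the ray starting at lam is
strictly smaller (in F-lex order) than the ray starting at lam + t, for 0 < t < p. -/
lemma exists_lyndon (y : ℤ → A) (F : A → ℕ)
    (hF : ∀ a b, F a = F b → a = b) (p : ℕ) (hp : 0 < p)
    (hper : ∀ n : ℤ, y (n + (p : ℤ)) = y n)
    (hleast : ∀ k : ℕ, 0 < k → k < p → ∃ n : ℤ, y (n + (k : ℤ)) ≠ y n) :
    ∃ lam : ℤ, 0 ≤ lam ∧ lam < (p : ℤ) ∧ ∀ t : ℤ, 0 < t → t < (p : ℤ) →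
      ∃ q : ℕ, (∀ i : ℕ, i < q → y (lam + (i : ℤ)) = y (lam + t + (i : ℤ))) ∧
        F (y (lam + (q : ℤ))) < F (y (lam + t + (q : ℤ))) := by
  classical
  set R : ℤ → ℤ → Prop := fun s s' => ∃ q : ℕ,
    (∀ i : ℕ, i < q → y (s + (i : ℤ)) = y (s' + (i : ℤ))) ∧
      F (y (s + (q : ℤ))) < F (y (s' + (q : ℤ))) with hR
  set E : ℤ → ℤ → Prop := fun s s' => ∀ i : ℕ, y (s + (i : ℤ)) = y (s' + (i : ℤ)) with hE
  have Erefl : ∀ s, E s s := fun s i => rfl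
  have Esymm : ∀ {s s'}, E s s' → E s' s := fun h i => (h i).symm
  have tricho : ∀ s s', E s s' ∨ R s s' ∨ R s' s := by
    intro s s'
    by_cases h : E s s'
    · exact Or.inl h
    · right
      have hex : ∃ i : ℕ, y (s + (i : ℤ)) ≠ y (s' + (i : ℤ)) := by
        by_contra hc; push_neg at hc; exact h hc
      set q := Nat.find hex with hq
      have hqs : y (s + (q : ℤ)) ≠ y (s' + (q : ℤ)) := Nat.find_spec hex
      have hqm : ∀ i : ℕ, i < q → y (s + (i : ℤ)) = y (s' + (i : ℤ)) := by
        intro i hi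
        have := Nat.find_min hex hi
        simpa using this
      have hFne : F (y (s + (q : ℤ))) ≠ F (y (s' + (q : ℤ))) := fun hc => hqs (hF _ _ hc)
      rcases lt_or_gt_of_ne hFne with hlt | hgt
      · exact Or.inl ⟨q, hqm, hlt⟩
      · exact Or.inr ⟨q, fun i hi => (hqm i hi).symm, hgt⟩
  have Rcongr : ∀ {s s' s''}, R s s' → E s' s'' → R s s'' := by
    rintro s s' s'' ⟨q, hpre, hlt⟩ he
    exact ⟨q, fun i hi => (hpre i hi).trans (he i), by rw [← he q]; exact hlt⟩
  have Rtrans : ∀ {s s' s''}, R s s' → R s' s'' → R s s'' := by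
    rintro s s' s'' ⟨q1, hp1, hl1⟩ ⟨q2, hp2, hl2⟩
    rcases lt_trichotomy q1 q2 with h | h | h
    · exact ⟨q1, fun i hi => (hp1 i hi).trans (hp2 i (hi.trans h)),
        by rw [← hp2 q1 h]; exact hl1⟩
    · subst h
      exact ⟨q1, fun i hi => (hp1 i hi).trans (hp2 i hi), hl1.trans hl2⟩
    · exact ⟨q2, fun i hi => (hp1 i (hi.trans h)).trans (hp2 i hi),
        by rw [hp1 q2 h]; exact hl2⟩
  -- minimum over a list of phases
  have minlist : ∀ L : List ℤ, L = [] ∨ ∃ lam ∈ L, ∀ s ∈ L, E lam s ∨ R lam s := by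
    intro L
    induction L with
    | nil => exact Or.inl rfl
    | cons a L ih =>
      right
      rcases ih with rfl | ⟨lam, hmem, hall⟩
      · refine ⟨a, by simp, ?_⟩
        intro s hs
        simp only [List.mem_singleton] at hs
        subst hs
        exact Or.inl (Erefl _)
      · rcases tricho a lam with he | hr | hr
        · refine ⟨lam, List.mem_cons_of_mem _ hmem, ?_⟩
          intro s hs
          rcases List.mem_cons.mp hs with rfl | hs
          · exact Or.inl (Esymm he)
          · exact hall s hs
        · refine ⟨a, List.mem_cons_self, ?_⟩
          intro s hs
          rcases List.mem_cons.mp hs with rfl | hs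
          · exact Or.inl (Erefl s)
          · rcases hall s hs with he | hr2
            · exact Or.inr (Rcongr hr he)
            · exact Or.inr (Rtrans hr hr2)
        · refine ⟨lam, List.mem_cons_of_mem _ hmem, ?_⟩
          intro s hs
          rcases List.mem_cons.mp hs with rfl | hs
          · exact Or.inr hr
          · exact hall s hs
  have hmm := minlist ((List.range p).map (Nat.cast : ℕ → ℤ))
  rcases hmm with hnil | ⟨lam, hlammem, hall⟩
  · exfalso
    have hlen : ((List.range p).map (Nat.cast : ℕ → ℤ)).length = p := by simp
    rw [hnil] at hlen
    simp at hlen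
    omega
  obtain ⟨kl, hkl, hkl2⟩ := List.mem_map.mp hlammem
  have hklp : kl < p := List.mem_range.mp hkl
  refine ⟨lam, by omega, ?_, ?_⟩
  · rw [← hkl2]; exact_mod_cast hklp
  · intro t ht htp
    set s : ℤ := (lam + t) % (p : ℤ) with hs
    have hps : (0 : ℤ) < (p : ℤ) := by exact_mod_cast hp
    have hs0 : 0 ≤ s := Int.emod_nonneg _ (by omega)
    have hsp : s < (p : ℤ) := Int.emod_lt_of_pos _ hps
    have hsmem : s ∈ (List.range p).map (Nat.cast : ℕ → ℤ) := by
      refine List.mem_map.mpr ⟨s.toNat, List.mem_range.mpr ?_, by omega⟩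
      omega
    have hse : s % (p : ℤ) = (lam + t) % (p : ℤ) := by
      rw [hs]; exact Int.emod_emod_of_dvd _ dvd_rfl
    have hmod : ∀ i : ℕ, (s + (i : ℤ)) % (p : ℤ) = (lam + t + (i : ℤ)) % (p : ℤ) := by
      intro i
      exact Int.ModEq.add_right _ hse
    have htrace : ∀ i : ℕ, y (s + (i : ℤ)) = y (lam + t + (i : ℤ)) := fun i =>
      ykey hper (hmod i)
    rcases hall s hsmem with he | hr
    · -- ray equality gives a smaller period: contradiction
      exfalso
      obtain ⟨n, hn⟩ := hleast t.toNat (by omega) (by omega)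
      apply hn
      have hteq : ((t.toNat : ℕ) : ℤ) = t := by omega
      rw [hteq]
      set i : ℕ := ((n - lam) % (p : ℤ)).toNat with hi
      have hi' : ((i : ℕ) : ℤ) = (n - lam) % (p : ℤ) := by
        rw [hi, Int.toNat_of_nonneg (Int.emod_nonneg _ (by omega))]
      have hme : ((n - lam) % (p : ℤ)) % (p : ℤ) = (n - lam) % (p : ℤ) :=
        Int.emod_emod_of_dvd _ dvd_rfl
      have h1 : (lam + (i : ℤ)) % (p : ℤ) = n % (p : ℤ) := by
        rw [hi']
        have h := Int.ModEq.add_left lam (hme : Int.ModEq (p : ℤ) _ _)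
        have harg : lam + (n - lam) = n := by ring
        rw [harg] at h
        exact h
      have h2 : (s + (i : ℤ)) % (p : ℤ) = (n + t) % (p : ℤ) := by
        rw [hi']
        have h := (Int.ModEq.add_right ((n - lam) % (p : ℤ))
          (hse : Int.ModEq (p : ℤ) _ _)).trans
          (Int.ModEq.add_left (lam + t) (hme : Int.ModEq (p : ℤ) _ _))
        have harg : lam + t + (n - lam) = n + t := by ring
        rw [harg] at h
        exact h
      calc y (n + t) = y (s + (i : ℤ)) := (ykey hper h2).symm
        _ = y (lam + (i : ℤ)) := (he i).symm
        _ = y n := ykey hper h1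
    · obtain ⟨q, hpre, hlt⟩ := hr
      exact ⟨q, fun i hi => (hpre i hi).trans (htrace i), by rw [← htrace q]; exact hlt⟩


lemma ykey_mul {y : ℤ → A} {p : ℕ}
    (hper : ∀ (k : ℤ) (n : ℤ), y (n + (p : ℤ) * k) = y n)
    {a b : ℤ} (h : a % (p : ℤ) = b % (p : ℤ)) : y a = y b := by
  have hd : (p : ℤ) ∣ a - b := Int.ModEq.dvd (Int.ModEq.symm h)
  obtain ⟨k, hk⟩ := hd
  have : a = b + (p : ℤ) * k := by linarith
  rw [this, hper]
lemma core_unbordered (y : ℤ → A) (F : A → ℕ) (p : ℕ) (hp : 0 < p)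
    (hper : ∀ n : ℤ, y (n + (p : ℤ)) = y n) (lam : ℤ)
    (hLyn : ∀ t : ℤ, 0 < t → t < (p : ℤ) → ∃ q : ℕ,
      (∀ i : ℕ, i < q → y (lam + (i : ℤ)) = y (lam + t + (i : ℤ))) ∧
      F (y (lam + (q : ℤ))) < F (y (lam + t + (q : ℤ))))
    (c : A) (m : ℕ) (hc : c ≠ y (lam + (m : ℤ)))
    (hctop : ∀ a : A, a ≠ c → F a < F c) :
    ¬ OverlapsSelfNontrivially ((List.ofFn fun j : Fin m => y (lam + (j : ℕ))) ++ [c]) := by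
  set B : List A := (List.ofFn fun j : Fin m => y (lam + (j : ℕ))) ++ [c] with hB
  have hBlen : B.length = m + 1 := by simp [hB]
  rintro ⟨l, hl0, hlB, heq⟩
  rw [hBlen] at hlB
  -- pointwise description of B
  have getB : ∀ (i : ℕ) (hi : i < B.length), B[i] = if h : i < m then y (lam + (i : ℤ)) else c := by
    intro i hi
    rw [hBlen] at hi
    by_cases h : i < m
    · simp only [hB]
      rw [List.getElem_append_left (by simpa using h)]
      simp [h]
    · have him : i = m := by omega
      simp only [hB]
      rw [List.getElem_append_right (by simpa using Nat.le_of_eq him.symm)]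
      simp [h, him]
  -- pointwise consequence of the border equation
  have hpt : ∀ i : ℕ, i < l →
      (if h : (m + 1 - l + i) < m then y (lam + ((m + 1 - l + i : ℕ) : ℤ)) else c)
        = (if h : i < m then y (lam + (i : ℤ)) else c) := by
    intro i hi
    have hd : (B.drop (B.length - l)).length = l := by
      simp [hBlen]; omega
    have hil : i < (B.drop (B.length - l)).length := by omega
    have h1 : (B.drop (B.length - l))[i] = (B.take l)[i]'(by rwa [heq] at hil) :=
      List.getElem_of_eq heq hil
    rw [List.getElem_drop, List.getElem_take] at h1
    rw [getB, getB] at h1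
    rw [hBlen] at h1
    convert h1 using 2 <;> omega
  have hl1m : l - 1 < m := by omega
  set ta : ℕ := m + 1 - l with hta
  have hta1 : 1 ≤ ta := by omega
  have htam : ta + (l - 1) = m := by omega
  -- E2 : c = y (lam + (l-1))
  have hE2 : c = y (lam + ((l - 1 : ℕ) : ℤ)) := by
    have := hpt (l - 1) (by omega)
    rw [dif_neg (by omega), dif_pos (by omega)] at this
    exact this
  -- E1
  have hE1 : ∀ i : ℕ, i < l - 1 → y (lam + ((ta + i : ℕ) : ℤ)) = y (lam + (i : ℤ)) := by
    intro i hi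
    have := hpt i (by omega)
    rw [dif_pos (by omega), dif_pos (by omega)] at this
    exact this
  set ts : ℕ := ta % p with hts
  have hkey : ∀ j : ℤ, y (lam + (ts : ℤ) + j) = y (lam + (ta : ℤ) + j) := by
    intro j
    have hdecomp : lam + (ta : ℤ) + j = (lam + (ts : ℤ) + j) + (p : ℤ) * ((ta / p : ℕ) : ℤ) := by
      have hnat : ta = ts + p * (ta / p) := by
        rw [hts]; exact (Nat.mod_add_div ta p).symm
      have : (ta : ℤ) = (ts : ℤ) + (p : ℤ) * ((ta / p : ℕ) : ℤ) := by
        exact_mod_cast hnat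
      rw [this]; ring
    rw [hdecomp, per_mul hper]
  by_cases hts0 : ts = 0
  · -- aligned case
    apply hc
    have hdvd : p ∣ ta := Nat.dvd_of_mod_eq_zero (by rwa [← hts])
    obtain ⟨k, hk⟩ := hdvd
    have : y (lam + (m : ℤ)) = y (lam + ((l - 1 : ℕ) : ℤ)) := by
      have hdecomp : lam + (m : ℤ) = (lam + ((l - 1 : ℕ) : ℤ)) + (p : ℤ) * (k : ℤ) := by
        have hnat : m = (l - 1) + p * k := by omega
        have : (m : ℤ) = ((l - 1 : ℕ) : ℤ) + (p : ℤ) * (k : ℤ) := by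
          exact_mod_cast hnat
        rw [this]; ring
      rw [hdecomp, per_mul hper]
    rw [this, ← hE2]
  · have htsp : ts < p := Nat.mod_lt _ hp
    obtain ⟨q, hpre, hlt⟩ := hLyn (ts : ℤ) (by exact_mod_cast Nat.pos_of_ne_zero hts0)
      (by exact_mod_cast htsp)
    rcases lt_trichotomy q (l - 1) with hq | hq | hq
    · -- q < l - 1 : irreflexivity
      have h1 : y (lam + ((ta + q : ℕ) : ℤ)) = y (lam + (q : ℤ)) := hE1 q hq
      have h2 : y (lam + (ts : ℤ) + (q : ℤ)) = y (lam + ((ta + q : ℕ) : ℤ)) := by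
        have := hkey (q : ℤ)
        rw [this]
        congr 1
        push_cast
        ring
      rw [h2, h1] at hlt
      exact lt_irrefl _ hlt
    · -- q = l - 1 : asymmetry with top letter
      have h2 : y (lam + (ts : ℤ) + (q : ℤ)) = y (lam + (m : ℤ)) := by
        have := hkey (q : ℤ)
        rw [this]
        congr 1
        have : ta + q = m := by omega
        push_cast
        omega
      rw [h2] at hlt
      rw [← hq] at hE2
      rw [← hE2] at hlt
      have := hctop (y (lam + (m : ℤ))) (Ne.symm hc)
      omega
    · -- q > l - 1
      apply hc
      have h1 : y (lam + ((l - 1 : ℕ) : ℤ)) = y (lam + (ts : ℤ) + ((l - 1 : ℕ) : ℤ)) :=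
        hpre (l - 1) hq
      have h2 : y (lam + (ts : ℤ) + ((l - 1 : ℕ) : ℤ)) = y (lam + (m : ℤ)) := by
        have := hkey ((l - 1 : ℕ) : ℤ)
        rw [this]
        congr 1
        push_cast
        omega
      rw [hE2, h1, h2]



variable {A : Type*}

lemma exists_periodic_agree [TopologicalSpace A] [DiscreteTopology A]
    {X : Set (ℤ → A)}
    (hdense : ∀ x ∈ X,
      x ∈ closure {y | y ∈ X ∧ ∃ k : ℕ, 0 < k ∧ ∀ n : ℤ, y (n + k) = y n})
    {x : ℤ → A} (hx : x ∈ X) (i : ℤ) (m : ℕ) :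
    ∃ y, y ∈ X ∧ (∃ k : ℕ, 0 < k ∧ ∀ n : ℤ, y (n + k) = y n) ∧
      ∀ j : ℕ, j < m → y (i + (j : ℤ)) = x (i + (j : ℤ)) := by
  set U : Set (ℤ → A) := {z : ℤ → A | ∀ j : ℕ, j < m → z (i + (j : ℤ)) = x (i + (j : ℤ))} with hU
  have hUopen : IsOpen U := by
    have : U = ⋂ j ∈ Finset.range m, {z : ℤ → A | z (i + (j : ℤ)) = x (i + (j : ℤ))} := by
      ext z; simp [hU]
    rw [this]
    apply isOpen_biInter_finset
    intro j _
    have : {z : ℤ → A | z (i + (j : ℤ)) = x (i + (j : ℤ))}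
        = (fun z : ℤ → A => z (i + (j : ℤ))) ⁻¹' {x (i + (j : ℤ))} := by
      ext z; simp
    rw [this]
    exact (isOpen_discrete _).preimage (continuous_apply _)
  have hxU : x ∈ U := fun j _ => rfl
  obtain ⟨y, hyU, hyS⟩ := mem_closure_iff_nhds.mp (hdense x hx) U (hUopen.mem_nhds hxU)
  exact ⟨y, hyS.1, hyS.2, hyU⟩

lemma exists_nonfactor {X : Set (ℤ → A)} (hinf : X.Infinite)
    (y : ℤ → A) (p : ℕ) (hp : 0 < p)
    (hper : ∀ (k : ℤ) (n : ℤ), y (n + (p : ℤ) * k) = y n) :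
    ∃ z ∈ X, ∃ (mz : ℕ) (iz : ℤ), ∀ i : ℤ,
      ¬ (∀ j : ℕ, j < mz → z (iz + (j : ℤ)) = y (i + (j : ℤ))) := by
  by_contra hcon
  push_neg at hcon
  -- hcon : ∀ z ∈ X, ∀ mz iz, ∃ i, ∀ j < mz, ...
  apply hinf
  have hsub : X ⊆ Set.range (fun d : Fin p => (fun t : ℤ => y (t + (d : ℤ)))) := by
    intro z hz
    have h1 : ∀ M : ℕ, ∃ d : ℕ, d < p ∧
        ∀ t : ℤ, -(M : ℤ) ≤ t → t ≤ (M : ℤ) → z t = y (t + (d : ℤ)) := by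
      intro M
      obtain ⟨i, hi⟩ := hcon z hz (2 * M + 1) (-(M : ℤ))
      set d : ℤ := (i + (M : ℤ)) % (p : ℤ) with hd
      have hps : (0 : ℤ) < (p : ℤ) := by exact_mod_cast hp
      have hd0 : 0 ≤ d := Int.emod_nonneg _ (by omega)
      have hdp : d < (p : ℤ) := Int.emod_lt_of_pos _ hps
      refine ⟨d.toNat, by omega, ?_⟩
      intro t ht1 ht2
      obtain ⟨j, hj1, hj2⟩ : ∃ j : ℕ, (j : ℤ) = t + (M : ℤ) ∧ j < 2 * M + 1 :=
        ⟨(t + (M : ℤ)).toNat, by omega, by omega⟩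
      have h2 := hi j hj2
      have h3 : -(M : ℤ) + (j : ℤ) = t := by omega
      rw [h3] at h2
      rw [h2]
      have hcast : ((d.toNat : ℕ) : ℤ) = d := by omega
      rw [hcast]
      apply ykey_mul hper
      have hme : d % (p : ℤ) = (i + (M : ℤ)) % (p : ℤ) := by
        rw [hd]; exact Int.emod_emod_of_dvd _ dvd_rfl
      have := Int.ModEq.add_left t (hme : Int.ModEq (p : ℤ) _ _)
      have harg : i + (j : ℤ) = t + (i + (M : ℤ)) := by omega
      rw [harg]
      exact (this.symm : _)
    choose dfun hdlt hdagree using h1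
    obtain ⟨dv, hdv⟩ := Finite.exists_infinite_fiber (fun M : ℕ => (⟨dfun M, hdlt M⟩ : Fin p))
    have hfib : Set.Infinite ((fun M : ℕ => (⟨dfun M, hdlt M⟩ : Fin p)) ⁻¹' {dv}) :=
      Set.infinite_coe_iff.mp hdv
    refine ⟨dv, ?_⟩
    funext t
    obtain ⟨M, hM1, hM2⟩ := hfib.exists_gt t.natAbs
    have hdM : dfun M = (dv : ℕ) := by
      have : (⟨dfun M, hdlt M⟩ : Fin p) = dv := hM1
      exact congrArg Fin.val this
    have := hdagree M t (by omega) (by omega)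
    rw [hdM] at this
    exact this.symm
  exact Set.Finite.subset (Set.finite_range _) hsub


lemma getElem_idx_congr {l : List A} {i j : ℕ} (h : i = j) (hi : i < l.length) :
    l[i]'hi = l[j]'(h ▸ hi) := by subst h; rfl


end StmtAux

/-- In a transitive sofic shift, for every `n` there is a synchronizing word of length
at least `n` not overlapping itself nontrivially.  We axiomatize the needed facts about
transitive sofic shifts: transitivity, right-extension to synchronizing words, and
density of periodic points. -/
theorem stmt3 {A : Type*} [Fintype A] [TopologicalSpace A] [DiscreteTopology A]
    (X : Set (ℤ → A)) (hcl : IsClosed X)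
    (hinv : ∀ x ∈ X, shift x ∈ X) (hinv' : ∀ x ∈ X, (fun n : ℤ => x (n - 1)) ∈ X)
    (hinf : X.Infinite)
    (htrans : ∀ u w : List A, InLanguage X u → InLanguage X w →
      ∃ v : List A, InLanguage X (u ++ v ++ w))
    (hsync : ∀ w : List A, InLanguage X w → ∃ u : List A, Synchronizing X (w ++ u))
    (hdense : ∀ x ∈ X,
      x ∈ closure {y | y ∈ X ∧ ∃ k : ℕ, 0 < k ∧ ∀ n : ℤ, y (n + k) = y n})
    (n : ℕ) :
    ∃ M : List A, n ≤ M.length ∧ Synchronizing X M ∧ ¬ OverlapsSelfNontrivially M := by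
  classical
  obtain ⟨x₀, hx₀⟩ := hinf.nonempty
  have hw₀ : InLanguage X [x₀ 0] := by
    have h := StmtAux.inLanguage_win hx₀ 0 1
    have he : StmtAux.win x₀ 0 1 = [x₀ 0] := by
      simp [StmtAux.win, List.ofFn_succ]
    rwa [he] at h
  obtain ⟨u₀, hs⟩ := hsync [x₀ 0] hw₀
  set s : List A := [x₀ 0] ++ u₀ with hsdef
  set S : ℕ := s.length with hSdef
  obtain ⟨x₁, hx₁, i₁, hocc⟩ := hs.1
  obtain ⟨y, hyX, ⟨k₀, hk₀, hk₀per⟩, hagree⟩ :=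
    StmtAux.exists_periodic_agree hdense hx₁ i₁ S
  have hoccy : ∀ j : Fin s.length, y (i₁ + ((j : ℕ) : ℤ)) = s.get j := fun j => by
    rw [hagree j j.2]; exact hocc j
  have hex : ∃ k : ℕ, 0 < k ∧ ∀ n : ℤ, y (n + (k : ℤ)) = y n := ⟨k₀, hk₀, hk₀per⟩
  set p : ℕ := Nat.find hex with hpdef
  have hp : 0 < p := (Nat.find_spec hex).1
  have hperp : ∀ n : ℤ, y (n + (p : ℤ)) = y n := (Nat.find_spec hex).2
  have hleast : ∀ k : ℕ, 0 < k → k < p → ∃ n : ℤ, y (n + (k : ℤ)) ≠ y n := by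
    intro k hk1 hk2
    by_contra hcon
    push_neg at hcon
    exact Nat.find_min hex hk2 ⟨hk1, hcon⟩
  have hpm : ∀ (k : ℤ) (n : ℤ), y (n + (p : ℤ) * k) = y n := StmtAux.per_mul hperp
  obtain ⟨z, hzX, mz, iz, hnf⟩ := StmtAux.exists_nonfactor hinf y p hp hpm
  set T : ℕ := n + 2 * p + S + 2 with hT
  obtain ⟨v, hh⟩ := htrans (StmtAux.win y 0 T) (StmtAux.win z iz mz)
    (StmtAux.inLanguage_win hyX 0 T) (StmtAux.inLanguage_win hzX iz mz)
  set hlist : List A := StmtAux.win y 0 T ++ v ++ StmtAux.win z iz mz with hhl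
  set seqh : ℕ → A := fun j => hlist.getD j (y 0) with hseqh
  have hlistlen : hlist.length = T + v.length + mz := by simp [hhl]; omega
  have hPex : ∃ j : ℕ, j < hlist.length ∧ seqh j ≠ y (j : ℤ) := by
    by_contra hno
    push_neg at hno
    apply hnf ((T : ℤ) + (v.length : ℤ))
    intro j hj
    have hl1 : T + v.length + j < hlist.length := by omega
    have e1 : hlist[T + v.length + j]'hl1 = z (iz + (j : ℤ)) := by
      simp only [hhl]
      rw [List.getElem_append_right (by simp)]
      rw [StmtAux.win_getElem]
      congr 2
      simp
    have e2 : seqh (T + v.length + j) = y ((T + v.length + j : ℕ) : ℤ) := hno _ hl1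
    simp only [hseqh] at e2
    rw [List.getD_eq_getElem _ _ hl1] at e2
    have e3 : ((T + v.length + j : ℕ) : ℤ) = (T : ℤ) + (v.length : ℤ) + (j : ℤ) := by
      push_cast; ring
    rw [← e1, e2, e3]
  set D : ℕ := Nat.find hPex with hDdef
  have hD : D < hlist.length ∧ seqh D ≠ y (D : ℤ) := Nat.find_spec hPex
  have hmin : ∀ j : ℕ, j < D → j < hlist.length → seqh j = y (j : ℤ) := by
    intro j hj hjl
    have h := Nat.find_min hPex hj
    push_neg at h
    exact h hjl
  have hTD : T ≤ D := by
    by_contra hc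
    push_neg at hc
    apply hD.2
    simp only [hseqh]
    rw [List.getD_eq_getElem _ _ hD.1]
    simp only [hhl]
    rw [List.getElem_append_left (by simp; omega), List.getElem_append_left (by simp; omega)]
    rw [StmtAux.win_getElem]
    simp
  set c : A := seqh D with hcdef
  set F : A → ℕ := fun a => if a = c then Fintype.card A + 1
    else ((Fintype.equivFin A) a : ℕ) with hFdef
  have hFinj : ∀ a b : A, F a = F b → a = b := by
    intro a b hab
    simp only [hFdef] at hab
    by_cases ha : a = c <;> by_cases hb : b = c
    · rw [ha, hb]
    · rw [if_pos ha, if_neg hb] at hab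
      have := ((Fintype.equivFin A) b).2
      omega
    · rw [if_neg ha, if_pos hb] at hab
      have := ((Fintype.equivFin A) a).2
      omega
    · rw [if_neg ha, if_neg hb] at hab
      exact (Fintype.equivFin A).injective (Fin.val_injective hab)
  have hctop : ∀ a : A, a ≠ c → F a < F c := by
    intro a ha
    simp only [hFdef, if_neg ha, if_pos rfl]
    have := ((Fintype.equivFin A) a).2
    omega
  obtain ⟨lam, hlam0, hlamp, hLyn⟩ := StmtAux.exists_lyndon y F hFinj p hp hperp hleast
  set r : ℕ := lam.toNat with hrdef
  have hrcast : (r : ℤ) = lam := by omega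
  have hrp : r < p := by omega
  have hrD : r ≤ D := by omega
  set m : ℕ := D - r with hmdef
  set B : List A := StmtAux.win y lam m ++ [c] with hBdef
  have hBlen : B.length = m + 1 := by simp [hBdef]
  have hBeq : (hlist.take (D + 1)).drop r = B := by
    apply List.ext_getElem
    · simp [hBdef]
      omega
    · intro i h1 h2
      have hi : i < m + 1 := by rw [hBlen] at h2; exact h2
      rw [List.getElem_drop, List.getElem_take]
      by_cases him : i < m
      · have hri : r + i < D := by omega
        have e1 : hlist[r + i]'(by omega) = y ((r + i : ℕ) : ℤ) := by
          have h := hmin (r + i) hri (by omega)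
          simp only [hseqh] at h
          rw [List.getD_eq_getElem _ _ (by omega : r + i < hlist.length)] at h
          exact h
        refine e1.trans ?_
        simp only [hBdef]
        rw [List.getElem_append_left (by simp [him])]
        rw [StmtAux.win_getElem]
        congr 1
        push_cast
        omega
      · have hrD' : r + i = D := by omega
        have e1 : hlist[r + i]'(by omega) = c := by
          simp only [hcdef, hseqh]
          rw [List.getD_eq_getElem _ _ (by omega : D < hlist.length)]
          exact StmtAux.getElem_idx_congr hrD' _
        refine e1.trans ?_
        simp only [hBdef]
        rw [List.getElem_append_right (by simp; omega)]
        simp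
  have hBL : InLanguage X B := by
    rw [← hBeq]
    exact StmtAux.inLanguage_drop (StmtAux.inLanguage_take hh (D + 1)) r
  have hcne : c ≠ y (lam + (m : ℤ)) := by
    have he : lam + (m : ℤ) = ((D : ℕ) : ℤ) := by omega
    rw [he]
    exact hD.2
  have hunb : ¬ OverlapsSelfNontrivially B := by
    rw [hBdef]
    exact StmtAux.core_unbordered y F p hp hperp lam hLyn c m hcne hctop
  set r₂ : ℕ := ((i₁ - lam) % (p : ℤ)).toNat with hr₂def
  have hr₂cast : ((r₂ : ℕ) : ℤ) = (i₁ - lam) % (p : ℤ) := by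
    rw [hr₂def, Int.toNat_of_nonneg (Int.emod_nonneg _ (by omega))]
  have hr₂p : r₂ < p := by
    have h := Int.emod_lt_of_pos (i₁ - lam) (by exact_mod_cast hp : (0 : ℤ) < (p : ℤ))
    omega
  have hoccw : ∀ j : ℕ, j < S → ∀ (hj : j < s.length),
      y (lam + ((r₂ + j : ℕ) : ℤ)) = s.get ⟨j, hj⟩ := by
    intro j hjS hj
    have h1 : y (lam + ((r₂ + j : ℕ) : ℤ)) = y (i₁ + (j : ℤ)) := by
      apply StmtAux.ykey hperp
      have hme : ((i₁ - lam) % (p : ℤ)) % (p : ℤ) = (i₁ - lam) % (p : ℤ) :=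
        Int.emod_emod_of_dvd _ dvd_rfl
      have h := Int.ModEq.add_right (j : ℤ)
        (Int.ModEq.add_left lam (hme : Int.ModEq (p : ℤ) _ _))
      have harg : lam + (i₁ - lam) + (j : ℤ) = i₁ + (j : ℤ) := by ring
      rw [harg] at h
      calc (lam + ((r₂ + j : ℕ) : ℤ)) % (p : ℤ)
          = (lam + (i₁ - lam) % (p : ℤ) + (j : ℤ)) % (p : ℤ) := by
            congr 1; push_cast; omega
        _ = (i₁ + (j : ℤ)) % (p : ℤ) := h
    rw [h1]
    exact hoccy ⟨j, hj⟩
  have hr₂m : r₂ + S ≤ m := by omega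
  set mid : List A := (B.drop r₂).take S with hmiddef
  have hmid : mid = s := by
    apply List.ext_getElem
    · simp [hmiddef, hBlen]
      omega
    · intro j h1 h2
      have hjS : j < S := by
        simp [hmiddef, hBlen] at h1
        omega
      simp only [hmiddef]
      rw [List.getElem_take, List.getElem_drop]
      have hrj : r₂ + j < m := by omega
      simp only [hBdef]
      rw [List.getElem_append_left (by simp; omega)]
      rw [StmtAux.win_getElem]
      have h := hoccw j hjS h2
      rw [List.get_eq_getElem] at h
      exact h
  have hsplit : B = B.take r₂ ++ s ++ (B.drop r₂).drop S := by
    rw [← hmid, hmiddef]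
    rw [List.append_assoc, List.take_append_drop, List.take_append_drop]
  have hsyncB : Synchronizing X B := by
    rw [hsplit]
    exact StmtAux.sync_extend hs (by rw [← hsplit]; exact hBL)
  refine ⟨B, ?_, hsyncB, hunb⟩
  rw [hBlen]
  omega
end

section
/- Let Q_k be the set of points of a subshift X that are left-k-periodic up to index k exactly. Then Q_k is invariant under the natural Aut(X)-action twisted by shifts: the translates σ^i Q_k for i ∈ ℤ are pairwise disjoint, and for every automorphism g and x ∈ Q_k there is a unique i ∈ ℤ with g x ∈ σ^i Q_k. -/
/-- `σ^i`, i.e. `(shiftIter i x) n = x (n + i)`. -/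
def shiftIter {A : Type*} (i : ℤ) (x : ℤ → A) : ℤ → A := fun n => x (n + i)

/-- The set of points of `X` which are left-`k`-periodic up to index `k` exactly
(with `k` the minimal left period). -/
def Qset {A : Type*} (X : Set (ℤ → A)) (k : ℕ) : Set (ℤ → A) :=
  {x | x ∈ X ∧ (∀ n : ℤ, n < k → x n = x (n - k)) ∧ x (k : ℤ) ≠ x ((k : ℤ) - k) ∧
    ∀ k' : ℕ, 0 < k' → k' < k → ¬ ∀ n : ℤ, n < k → x n = x (n - k')}

section Aux

variable {A : Type*}

lemma shiftIter_comp (x : ℤ → A) (a b : ℤ) :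
    shiftIter a (shiftIter b x) = shiftIter (a + b) x := by
  funext n; show x (n + a + b) = x (n + (a + b)); congr 1; ring

lemma shiftIter_zero (x : ℤ → A) : shiftIter 0 x = x := by
  funext n; show x (n + 0) = x n; congr 1; ring

lemma shiftIter_mem (X : Set (ℤ → A)) (hinv : ∀ x ∈ X, shift x ∈ X)
    (hinv' : ∀ x ∈ X, (fun n : ℤ => x (n - 1)) ∈ X) :
    ∀ (i : ℤ) (x : ℤ → A), x ∈ X → shiftIter i x ∈ X := by
  intro i
  induction i using Int.induction_on with
  | zero => intro x hx; rwa [shiftIter_zero]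
  | succ i ih =>
    intro x hx
    have h1 := hinv _ (ih x hx)
    have e : shift (shiftIter (i : ℤ) x) = shiftIter ((i : ℤ) + 1) x := by
      funext n; show x (n + 1 + (i:ℤ)) = x (n + ((i:ℤ) + 1)); congr 1; ring
    rwa [e] at h1
  | pred i ih =>
    intro x hx
    have h1 := hinv' _ (ih x hx)
    have e : (fun n : ℤ => shiftIter (-(i:ℤ)) x (n - 1)) = shiftIter (-(i:ℤ) - 1) x := by
      funext n; show x (n - 1 + -(i:ℤ)) = x (n + (-(i:ℤ) - 1)); congr 1; ring
    rwa [e] at h1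

lemma qset_shift_false {X : Set (ℤ → A)} {k : ℕ} {x : ℤ → A} (hx : x ∈ Qset X k)
    {d : ℤ} (hd : 0 < d) (hy : shiftIter d x ∈ Qset X k) : False := by
  have h1 := hy.2.1 ((k : ℤ) - d) (by omega)
  have e1 : shiftIter d x ((k:ℤ) - d) = x k := by
    show x _ = x _; congr 1; ring
  have e2 : shiftIter d x ((k:ℤ) - d - k) = x ((k:ℤ) - k) := by
    show x _ = x _; congr 1; ring
  rw [e1, e2] at h1
  exact hx.2.2.1 h1

lemma qset_disjoint (X : Set (ℤ → A)) (k : ℕ) :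
    ∀ i j : ℤ, i ≠ j → Disjoint (shiftIter i '' Qset X k) (shiftIter j '' Qset X k) := by
  intro i j hij
  rw [Set.disjoint_left]
  rintro w ⟨x, hx, rfl⟩ ⟨y, hy, hxy⟩
  -- hxy : shiftIter j y = shiftIter i x
  have hyx : y = shiftIter (i - j) x := by
    have := congrArg (shiftIter (-j)) hxy
    rw [shiftIter_comp, shiftIter_comp] at this
    rw [show -j + j = 0 by ring, shiftIter_zero] at this
    rw [show i - j = -j + i by ring]
    exact this
  rcases lt_trichotomy i j with h | h | h
  · have hxy' : x = shiftIter (j - i) y := by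
      rw [hyx, shiftIter_comp, show j - i + (i - j) = 0 by ring, shiftIter_zero]
    exact qset_shift_false hy (d := j - i) (by omega) (hxy' ▸ hx)
  · exact hij h
  · exact qset_shift_false hx (d := i - j) (by omega) (hyx ▸ hy)

end Aux
section Aux2

variable {A : Type*}

lemma per_eq {f : ℤ → A} {d : ℕ} (h : ∀ n : ℤ, f n = f (n - (d:ℤ)))
    {a b : ℤ} (hdvd : (d:ℤ) ∣ a - b) : f a = f b := by
  have key : ∀ t : ℤ, f (b + d * t) = f b := by
    intro t
    induction t using Int.induction_on with
    | zero => norm_num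
    | succ i ih =>
      have h2 := h (b + (d:ℤ) * ((i:ℤ) + 1))
      rw [show b + (d:ℤ) * ((i:ℤ)+1) - d = b + (d:ℤ) * (i:ℤ) by ring] at h2
      rw [h2, ih]
    | pred i ih =>
      have h2 := h (b + (d:ℤ) * (-(i:ℤ)))
      rw [show b + (d:ℤ) * (-(i:ℤ)) - d = b + (d:ℤ) * (-(i:ℤ) - 1) by ring] at h2
      rw [← h2]
      exact ih
  obtain ⟨t, ht⟩ := hdvd
  have ha : a = b + (d:ℤ) * t := by linarith
  rw [ha]; exact key t

lemma down {u : ℤ → A} {d : ℕ} {c : ℤ} (h : ∀ n : ℤ, n < c → u n = u (n - (d:ℤ))) :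
    ∀ (t : ℕ) (m : ℤ), m < c → u m = u (m - (d:ℤ) * t) := by
  intro t
  induction t with
  | zero => intro m hm; norm_num
  | succ t ih =>
    intro m hm
    rw [ih m hm]
    have hlt : m - (d:ℤ) * t < c := by
      have h0 : (0:ℤ) ≤ (d:ℤ) * t := by positivity
      omega
    rw [h _ hlt]
    congr 1; push_cast; ring

lemma extend [TopologicalSpace A] [DiscreteTopology A]
    {X : Set (ℤ → A)} (hcl : IsClosed X)
    (hmem : ∀ (i : ℤ) (x : ℤ → A), x ∈ X → shiftIter i x ∈ X)
    {u : ℤ → A} (hu : u ∈ X) {d : ℕ} (hd : 0 < d) {c : ℤ}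
    (hper : ∀ n : ℤ, n < c → u n = u (n - (d:ℤ))) :
    ∃ q : ℤ → A, q ∈ X ∧ (∀ n : ℤ, q n = q (n - (d:ℤ))) ∧ ∀ n : ℤ, n < c → u n = q n := by
  have hdz : (0:ℤ) < d := by exact_mod_cast hd
  set q : ℤ → A := fun n => u (c - d + (n - c) % d) with hqdef
  have hqper : ∀ n : ℤ, q n = q (n - (d:ℤ)) := by
    intro n
    show u _ = u _
    congr 2
    rw [show n - (d:ℤ) - c = n - c - d by ring]
    have e : (n - c - (d:ℤ)) % d = (n - c) % d := by
      rw [Int.sub_emod, Int.emod_self, sub_zero, Int.emod_emod_of_dvd _ dvd_rfl]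
    exact e.symm
  have hagree : ∀ n : ℤ, n < c → u n = q n := by
    intro n hn
    set rep : ℤ := c - d + (n - c) % d with hrep
    have hr1 : c - (d:ℤ) ≤ rep := by
      have := Int.emod_nonneg (n - c) (ne_of_gt hdz); omega
    have hr2 : rep < c := by
      have := Int.emod_lt_of_pos (n - c) hdz; omega
    have hdvd : (d:ℤ) ∣ rep - n := by
      have h1 := Int.emod_add_mul_ediv (n - c) (d:ℤ)
      exact ⟨-((n - c) / d) - 1, by linarith [h1]⟩
    obtain ⟨s, hs⟩ := hdvd
    have hs0 : 0 ≤ s := by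
      by_contra hneg
      push_neg at hneg
      have hs1 : s ≤ -1 := by omega
      have : (d:ℤ) * s ≤ (d:ℤ) * (-1) := by
        exact mul_le_mul_of_nonneg_left hs1 (le_of_lt hdz)
      omega
    have htn : ((s.toNat : ℤ)) = s := Int.toNat_of_nonneg hs0
    have hrd := down hper s.toNat rep hr2
    rw [show rep - (d:ℤ) * (s.toNat : ℤ) = n by rw [htn]; omega] at hrd
    exact hrd.symm
  refine ⟨q, ?_, hqper, hagree⟩
  have htend : Filter.Tendsto (fun j : ℕ => shiftIter (-((d:ℤ) * j)) u) Filter.atTop (nhds q) := by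
    rw [tendsto_pi_nhds]
    intro n
    refine Filter.Tendsto.congr' ?_ (tendsto_const_nhds : Filter.Tendsto (fun _ : ℕ => q n) Filter.atTop (nhds (q n)))
    rw [Filter.EventuallyEq, Filter.eventually_atTop]
    refine ⟨(n - c).toNat + 1, fun j hj => ?_⟩
    have hjc : n - (d:ℤ) * j < c := by
      have h1 : (j:ℤ) ≥ (n - c).toNat + 1 := by exact_mod_cast hj
      have h2 : ((n - c).toNat : ℤ) ≥ n - c := Int.self_le_toNat _
      have h3 : (d:ℤ) * j ≥ 1 * j := by
        apply mul_le_mul_of_nonneg_right (by exact_mod_cast hd) (by positivity)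
      omega
    show q n = u (n + -((d:ℤ) * j))
    rw [show n + -((d:ℤ)*j) = n - (d:ℤ)*j by ring]
    rw [hagree _ hjc]
    exact per_eq hqper ⟨j, by ring⟩
  exact hcl.mem_of_tendsto htend (Filter.Eventually.of_forall fun j => hmem _ u hu)

end Aux2
section Aux3

variable {A : Type*}

lemma phi_periodic {X : Set (ℤ → A)} (φ : X → ℤ → A)
    (hcomm : ∀ (i : ℤ) (u : ℤ → A) (hu : u ∈ X) (h2 : shiftIter i u ∈ X),
      φ ⟨shiftIter i u, h2⟩ = shiftIter i (φ ⟨u, hu⟩))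
    (hmem : ∀ (i : ℤ) (x : ℤ → A), x ∈ X → shiftIter i x ∈ X)
    {q : ℤ → A} (hq : q ∈ X) {d : ℕ} (hper : ∀ n : ℤ, q n = q (n - (d:ℤ))) :
    ∀ n : ℤ, φ ⟨q, hq⟩ n = φ ⟨q, hq⟩ (n - (d:ℤ)) := by
  have hqe : shiftIter (d:ℤ) q = q := by
    funext n
    show q (n + d) = q n
    rw [hper (n + d)]
    congr 1; ring
  have h := hcomm (d:ℤ) q hq (hmem (d:ℤ) q hq)
  rw [show (⟨shiftIter (d:ℤ) q, hmem (d:ℤ) q hq⟩ : X) = ⟨q, hq⟩ from Subtype.ext hqe] at h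
  intro n
  have h2 : φ ⟨q, hq⟩ (n - (d:ℤ)) = φ ⟨q, hq⟩ (n - (d:ℤ) + d) := congrFun h (n - (d:ℤ))
  rw [show n - (d:ℤ) + d = n by ring] at h2
  exact h2.symm

lemma comm_iter {X : Set (ℤ → A)} (hinv : ∀ x ∈ X, shift x ∈ X)
    (hinv' : ∀ x ∈ X, (fun n : ℤ => x (n - 1)) ∈ X) (φ : X → ℤ → A)
    (hφ : ∀ (u : ℤ → A) (hu : u ∈ X) (hs : shift u ∈ X),
      φ ⟨shift u, hs⟩ = shift (φ ⟨u, hu⟩)) :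
    ∀ (i : ℤ) (u : ℤ → A) (hu : u ∈ X) (h2 : shiftIter i u ∈ X),
      φ ⟨shiftIter i u, h2⟩ = shiftIter i (φ ⟨u, hu⟩) := by
  have hmem := shiftIter_mem X hinv hinv'
  have hφ' : ∀ (u : ℤ → A) (hu : u ∈ X) (h2 : shiftIter (-1) u ∈ X),
      φ ⟨shiftIter (-1) u, h2⟩ = shiftIter (-1) (φ ⟨u, hu⟩) := by
    intro u hu h2
    have hsv : shift (shiftIter (-1) u) = u := by
      funext n; show u (n + 1 + -1) = u n; congr 1; ring
    have hs : shift (shiftIter (-1) u) ∈ X := by rw [hsv]; exact hu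
    have heq := hφ (shiftIter (-1) u) h2 hs
    rw [show (⟨shift (shiftIter (-1) u), hs⟩ : X) = ⟨u, hu⟩ from Subtype.ext hsv] at heq
    funext n
    show φ ⟨shiftIter (-1) u, h2⟩ n = φ ⟨u, hu⟩ (n + -1)
    rw [heq]
    show _ = φ ⟨shiftIter (-1) u, h2⟩ (n + -1 + 1)
    congr 1; ring
  intro i
  induction i using Int.induction_on with
  | zero =>
    intro u hu h2
    have e : shiftIter 0 u = u := shiftIter_zero u
    rw [show (⟨shiftIter 0 u, h2⟩ : X) = ⟨u, hu⟩ from Subtype.ext e, shiftIter_zero]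
  | succ i ih =>
    intro u hu h2
    have hiu : shiftIter (i:ℤ) u ∈ X := hmem (i:ℤ) u hu
    have hsu : shift (shiftIter (i:ℤ) u) ∈ X := hinv _ hiu
    have e : shiftIter ((i:ℤ) + 1) u = shift (shiftIter (i:ℤ) u) := by
      funext n; show u (n + ((i:ℤ) + 1)) = u (n + 1 + (i:ℤ)); congr 1; ring
    calc φ ⟨shiftIter ((i:ℤ)+1) u, h2⟩
        = φ ⟨shift (shiftIter (i:ℤ) u), hsu⟩ := congrArg φ (Subtype.ext e)
      _ = shift (φ ⟨shiftIter (i:ℤ) u, hiu⟩) := hφ _ _ _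
      _ = shift (shiftIter (i:ℤ) (φ ⟨u, hu⟩)) := by rw [ih u hu hiu]
      _ = shiftIter ((i:ℤ)+1) (φ ⟨u, hu⟩) := by
          funext n; show (φ ⟨u,hu⟩) (n + 1 + (i:ℤ)) = (φ ⟨u,hu⟩) (n + ((i:ℤ)+1)); congr 1; ring
  | pred i ih =>
    intro u hu h2
    have hiu : shiftIter (-(i:ℤ)) u ∈ X := hmem _ u hu
    have hsu : shiftIter (-1) (shiftIter (-(i:ℤ)) u) ∈ X := hmem _ _ hiu
    have e : shiftIter (-(i:ℤ) - 1) u = shiftIter (-1) (shiftIter (-(i:ℤ)) u) := by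
      funext n; show u (n + (-(i:ℤ) - 1)) = u (n + -1 + -(i:ℤ)); congr 1; ring
    calc φ ⟨shiftIter (-(i:ℤ) - 1) u, h2⟩
        = φ ⟨shiftIter (-1) (shiftIter (-(i:ℤ)) u), hsu⟩ := congrArg φ (Subtype.ext e)
      _ = shiftIter (-1) (φ ⟨shiftIter (-(i:ℤ)) u, hiu⟩) := hφ' _ _ _
      _ = shiftIter (-1) (shiftIter (-(i:ℤ)) (φ ⟨u, hu⟩)) := by rw [ih u hu hiu]
      _ = shiftIter (-(i:ℤ) - 1) (φ ⟨u, hu⟩) := by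
          rw [shiftIter_comp, show -1 + -(i:ℤ) = -(i:ℤ) - 1 by ring]

lemma keyL [TopologicalSpace A] [DiscreteTopology A]
    {X : Set (ℤ → A)} (φ : X → ℤ → A) (hφc : Continuous φ)
    (hmem : ∀ (i : ℤ) (x : ℤ → A), x ∈ X → shiftIter i x ∈ X)
    (hcomm : ∀ (i : ℤ) (u : ℤ → A) (hu : u ∈ X) (h2 : shiftIter i u ∈ X),
      φ ⟨shiftIter i u, h2⟩ = shiftIter i (φ ⟨u, hu⟩))
    {u q : ℤ → A} (hu : u ∈ X) (hq : q ∈ X) {d : ℕ} (hd : 0 < d)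
    (hper : ∀ n : ℤ, q n = q (n - (d:ℤ))) {c : ℤ}
    (hagree : ∀ n : ℤ, n < c → u n = q n) :
    ∃ M : ℤ, ∀ n : ℤ, n < M → φ ⟨u, hu⟩ n = φ ⟨q, hq⟩ n := by
  have hdz : (0:ℤ) < d := by exact_mod_cast hd
  have step1 : ∀ r : ℤ, ∃ b : ℤ, ∀ (z : ℤ → A) (hz : z ∈ X),
      (∀ m : ℤ, m < b → z m = shiftIter r q m) →
      φ ⟨z, hz⟩ 0 = φ ⟨shiftIter r q, hmem r q hq⟩ 0 := by
    intro r
    have hPX : shiftIter r q ∈ X := hmem r q hq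
    have hf : Continuous (fun z : X => φ z 0) := (continuous_apply (0:ℤ)).comp hφc
    have hnb : (fun z : X => φ z 0) ⁻¹' {φ ⟨shiftIter r q, hPX⟩ 0} ∈
        nhds (⟨shiftIter r q, hPX⟩ : X) :=
      hf.continuousAt.preimage_mem_nhds (IsOpen.mem_nhds (isOpen_discrete _) rfl)
    rw [nhds_subtype_eq_comap, Filter.mem_comap] at hnb
    obtain ⟨t, ht, hts⟩ := hnb
    rw [nhds_pi, Filter.mem_pi] at ht
    obtain ⟨I, hIfin, tt, htt, hsub⟩ := ht
    obtain ⟨b0, hb0⟩ := hIfin.bddAbove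
    refine ⟨b0 + 1, fun z hz hagr => ?_⟩
    have hmemz : (⟨z, hz⟩ : X) ∈ (fun z : X => φ z 0) ⁻¹' {φ ⟨shiftIter r q, hPX⟩ 0} := by
      apply hts
      show z ∈ t
      apply hsub
      intro m hm
      have hzm : z m = shiftIter r q m := hagr m (by have := hb0 hm; omega)
      rw [hzm]
      exact mem_of_mem_nhds (htt m)
    simpa using hmemz
  choose b hb using step1
  have hne : (Finset.range d).Nonempty := ⟨0, Finset.mem_range.mpr hd⟩
  set B : ℤ := (Finset.range d).sup' hne (fun s : ℕ => b s) with hB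
  refine ⟨c - B, fun n hn => ?_⟩
  set r : ℤ := n % (d:ℤ) with hr
  have hr0 : 0 ≤ r := Int.emod_nonneg n (ne_of_gt hdz)
  have hrd : r < (d:ℤ) := Int.emod_lt_of_pos n hdz
  have hrB : b r ≤ B := by
    have h1 : r.toNat ∈ Finset.range d := Finset.mem_range.mpr (by omega)
    have h2 := Finset.le_sup' (fun s : ℕ => b s) h1
    rw [Int.toNat_of_nonneg hr0] at h2
    exact h2
  have hdvdnr : (d:ℤ) ∣ n - r := by
    have h1 := Int.emod_add_mul_ediv n (d:ℤ)
    exact ⟨n / d, by linarith⟩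
  have hagr : ∀ m : ℤ, m < b r → shiftIter n u m = shiftIter r q m := by
    intro m hm
    show u (m + n) = q (m + r)
    have h1 : m + n < c := by omega
    rw [hagree _ h1]
    obtain ⟨t, htt⟩ := hdvdnr
    exact per_eq hper ⟨t, by linarith⟩
  have h2 := hb r (shiftIter n u) (hmem n u hu) hagr
  have h3 : φ ⟨shiftIter n u, hmem n u hu⟩ 0 = φ ⟨u, hu⟩ (0 + n) :=
    congrFun (hcomm n u hu (hmem n u hu)) 0
  have h4 : φ ⟨shiftIter r q, hmem r q hq⟩ 0 = φ ⟨q, hq⟩ (0 + r) :=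
    congrFun (hcomm r q hq (hmem r q hq)) 0
  have hφqper := phi_periodic φ hcomm hmem hq hper
  have h6 : φ ⟨u, hu⟩ (0 + n) = φ ⟨q, hq⟩ (0 + r) := by rw [← h3, h2, h4]
  rw [zero_add, zero_add] at h6
  rw [h6]
  refine per_eq hφqper ?_
  obtain ⟨t, htt⟩ := hdvdnr
  exact ⟨-t, by linarith⟩

end Aux3

/-- The translates `σ^i Q_k` are pairwise disjoint, and every automorphism maps each
point of `Q_k` into a unique translate `σ^i Q_k`. -/
theorem stmt8 {A : Type*} [Fintype A] [TopologicalSpace A] [DiscreteTopology A]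
    (X : Set (ℤ → A)) (hcl : IsClosed X)
    (hinv : ∀ x ∈ X, shift x ∈ X) (hinv' : ∀ x ∈ X, (fun n : ℤ => x (n - 1)) ∈ X)
    (k : ℕ) (hk : 0 < k) :
    (∀ i j : ℤ, i ≠ j →
      Disjoint (shiftIter i '' Qset X k) (shiftIter j '' Qset X k)) ∧
    (∀ g : X ≃ₜ X,
      (∀ (x : X) (hs : shift (x : ℤ → A) ∈ X),
        ((g ⟨shift (x : ℤ → A), hs⟩ : X) : ℤ → A) = shift ((g x : X) : ℤ → A)) →
      ∀ (x : ℤ → A) (hx : x ∈ Qset X k),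
        ∃! i : ℤ, ((g ⟨x, hx.1⟩ : X) : ℤ → A) ∈ shiftIter i '' Qset X k) := by
  classical
  have hmem : ∀ (i : ℤ) (x : ℤ → A), x ∈ X → shiftIter i x ∈ X := shiftIter_mem X hinv hinv'
  have hdisj := qset_disjoint X k
  refine ⟨hdisj, ?_⟩
  intro g hg x hx
  set φ : X → ℤ → A := fun z => (g z : ℤ → A) with hφdef
  set ψ : X → ℤ → A := fun z => (g.symm z : ℤ → A) with hψdef
  have hφc : Continuous φ := continuous_subtype_val.comp g.continuous
  have hψc : Continuous ψ := continuous_subtype_val.comp g.symm.continuous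
  have hφ1 : ∀ (u : ℤ → A) (hu : u ∈ X) (hs : shift u ∈ X),
      φ ⟨shift u, hs⟩ = shift (φ ⟨u, hu⟩) := fun u hu hs => hg ⟨u, hu⟩ hs
  have hψ1 : ∀ (u : ℤ → A) (hu : u ∈ X) (hs : shift u ∈ X),
      ψ ⟨shift u, hs⟩ = shift (ψ ⟨u, hu⟩) := by
    intro u hu hs
    set v : X := g.symm ⟨u, hu⟩ with hv
    have hgv : g v = ⟨u, hu⟩ := g.apply_symm_apply _
    have h1 := hφ1 (v : ℤ → A) v.2 (hinv _ v.2)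
    have hveta : (⟨(v : ℤ → A), v.2⟩ : X) = v := rfl
    rw [hveta] at h1
    have hφv : φ v = u := by
      show ((g v : X) : ℤ → A) = u
      rw [hgv]
    rw [hφv] at h1
    -- h1 : φ ⟨shift ↑v, _⟩ = shift u
    have h2 : g ⟨shift (v : ℤ → A), hinv _ v.2⟩ = ⟨shift u, hs⟩ := Subtype.ext h1
    have h3 : (⟨shift (v : ℤ → A), hinv _ v.2⟩ : X) = g.symm ⟨shift u, hs⟩ := by
      rw [← h2, g.symm_apply_apply]
    show ((g.symm ⟨shift u, hs⟩ : X) : ℤ → A) = shift (ψ ⟨u, hu⟩)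
    rw [← h3]
  have hφi := comm_iter hinv hinv' φ hφ1
  have hψi := comm_iter hinv hinv' ψ hψ1
  set y : ℤ → A := φ ⟨x, hx.1⟩ with hy
  have hyX : y ∈ X := (g ⟨x, hx.1⟩).2
  have hψy : ψ ⟨y, hyX⟩ = x := by
    have e : (⟨y, hyX⟩ : X) = g ⟨x, hx.1⟩ := Subtype.ext rfl
    show ((g.symm ⟨y, hyX⟩ : X) : ℤ → A) = x
    rw [e, g.symm_apply_apply]
  obtain ⟨p, hpX, hpper, hpagree⟩ := extend hcl hmem hx.1 hk (c := (k:ℤ)) hx.2.1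
  obtain ⟨M, hM⟩ := keyL φ hφc hmem hφi hx.1 hpX hk hpper hpagree
  have hφpper := phi_periodic φ hφi hmem hpX hpper
  -- failures of k-periodicity of y are bounded below by M
  have hbdd : ∀ n : ℤ, y n ≠ y (n - (k:ℤ)) → M ≤ n := by
    intro n hn
    by_contra hc
    push_neg at hc
    apply hn
    show φ ⟨x, hx.1⟩ n = φ ⟨x, hx.1⟩ (n - (k:ℤ))
    rw [hM n (by omega), hM (n - (k:ℤ)) (by omega)]
    exact hφpper n
  have hnonempty : ∃ n : ℤ, y n ≠ y (n - (k:ℤ)) := by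
    by_contra hc
    push_neg at hc
    have hsy : shiftIter (k:ℤ) y = y := by
      funext n
      show y (n + k) = y n
      rw [hc (n + k)]
      congr 1; ring
    have h1 := hψi (k:ℤ) y hyX (hmem _ _ hyX)
    rw [show (⟨shiftIter (k:ℤ) y, hmem (k:ℤ) y hyX⟩ : X) = ⟨y, hyX⟩ from Subtype.ext hsy] at h1
    rw [hψy] at h1
    -- h1 : x = shiftIter k x
    have h2 : x 0 = x (0 + (k:ℤ)) := congrFun h1 0
    apply hx.2.2.1
    rw [show (k:ℤ) - k = 0 by ring, show (k:ℤ) = 0 + (k:ℤ) by ring]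
    exact h2.symm
  obtain ⟨N, hN, hNmin⟩ := Int.exists_least_of_bdd
    (P := fun n : ℤ => y n ≠ y (n - (k:ℤ))) ⟨M, fun z hz => hbdd z hz⟩ hnonempty
  have hbelow : ∀ m : ℤ, m < N → y m = y (m - (k:ℤ)) := by
    intro m hm
    by_contra hne
    exact absurd (hNmin m hne) (by omega)
  -- the witness translate
  have hzQ : shiftIter (N - (k:ℤ)) y ∈ Qset X k := by
    refine ⟨hmem _ _ hyX, ?_, ?_, ?_⟩
    · intro n hn
      show y (n + (N - (k:ℤ))) = y (n - k + (N - (k:ℤ)))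
      have h1 : n + (N - (k:ℤ)) < N := by omega
      rw [hbelow _ h1]
      congr 1; ring
    · show y ((k:ℤ) + (N - (k:ℤ))) ≠ y ((k:ℤ) - k + (N - (k:ℤ)))
      rw [show (k:ℤ) + (N - (k:ℤ)) = N by ring, show (k:ℤ) - k + (N - (k:ℤ)) = N - k by ring]
      exact hN
    · intro k' hk'pos hk'lt hall
      have hyk' : ∀ m : ℤ, m < N → y m = y (m - (k':ℤ)) := by
        intro m hm
        have h1 := hall (m - (N - (k:ℤ))) (by omega)
        have e1 : m - (N - (k:ℤ)) + (N - (k:ℤ)) = m := by ring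
        have e2 : m - (N - (k:ℤ)) - k' + (N - (k:ℤ)) = m - (k':ℤ) := by ring
        have h1' : y (m - (N - (k:ℤ)) + (N - (k:ℤ))) =
            y (m - (N - (k:ℤ)) - k' + (N - (k:ℤ))) := h1
        rw [e1, e2] at h1'
        exact h1'
      obtain ⟨q', hq'X, hq'per, hq'agree⟩ := extend hcl hmem hyX hk'pos (c := N) hyk'
      obtain ⟨M', hM'⟩ := keyL ψ hψc hmem hψi hyX hq'X hk'pos hq'per hq'agree
      rw [hψy] at hM'
      have hψq'per := phi_periodic ψ hψi hmem hq'X hq'per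
      have hxk' : ∀ n : ℤ, n < M' → x n = x (n - (k':ℤ)) := by
        intro n hn
        rw [hM' n hn, hM' (n - (k':ℤ)) (by omega)]
        exact hψq'per n
      apply hx.2.2.2 k' hk'pos hk'lt
      intro n hn
      have hdown := down (d := k) (c := (k:ℤ)) hx.2.1
      set t : ℕ := (n - M').toNat + 1 with ht
      have hk1 : (1:ℤ) ≤ (k:ℤ) := by exact_mod_cast hk
      have htlt : n - (k:ℤ) * t < M' := by
        have h1 : ((n - M').toNat : ℤ) ≥ n - M' := Int.self_le_toNat _
        have h2 : (1:ℤ) * (t:ℤ) ≤ (k:ℤ) * t := by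
          apply mul_le_mul_of_nonneg_right hk1 (by positivity)
        have h3 : (t:ℤ) = ((n - M').toNat : ℤ) + 1 := by push_cast [ht]; ring
        omega
      calc x n = x (n - (k:ℤ) * t) := hdown t n hn
        _ = x (n - (k:ℤ) * t - k') := hxk' _ htlt
        _ = x (n - (k':ℤ) - (k:ℤ) * t) := by congr 1; ring
        _ = x (n - (k':ℤ)) := (hdown t (n - (k':ℤ)) (by omega)).symm
  have hzeq : shiftIter ((k:ℤ) - N) (shiftIter (N - (k:ℤ)) y) = y := by
    rw [shiftIter_comp, show (k:ℤ) - N + (N - (k:ℤ)) = 0 by ring, shiftIter_zero]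
  have hmemi : y ∈ shiftIter ((k:ℤ) - N) '' Qset X k :=
    ⟨shiftIter (N - (k:ℤ)) y, hzQ, hzeq⟩
  refine ⟨(k:ℤ) - N, hmemi, ?_⟩
  intro j hj
  by_contra hne
  have hd := hdisj j ((k:ℤ) - N) hne
  exact (Set.disjoint_left.mp hd hj) hmemi
end

section
/- For a subshift X containing a left-k-periodic point, the map π: Q_k → Per_k/⟨σ⟩ sending a left-k-periodic point x to the σ-orbit of the unique k-periodic point y with y_n = x_n for all n < k is well-defined and Aut(X)-equivariant. -/
def CommutesWithShift {A : Type*} [TopologicalSpace A] (X : Set (ℤ → A)) (g : X ≃ₜ X) : Prop :=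
  ∀ (x : X) (hs : shift (x : ℤ → A) ∈ X),
    ((g ⟨shift (x : ℤ → A), hs⟩ : X) : ℤ → A) = shift ((g x : X) : ℤ → A)

lemma mem_shift_nat {A : Type*} {X : Set (ℤ → A)}
    (hinv' : ∀ x ∈ X, (fun n : ℤ => x (n - 1)) ∈ X) :
    ∀ (m : ℕ) (x : ℤ → A), x ∈ X → (fun n : ℤ => x (n - (m : ℤ))) ∈ X := by
  intro m
  induction m with
  | zero => intro x hx; simpa using hx
  | succ m ih =>
    intro x hx
    have h := hinv' _ (ih x hx)
    have he : (fun n : ℤ => x (n - ((m + 1 : ℕ) : ℤ)))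
        = fun n : ℤ => (fun j : ℤ => x (j - (m : ℤ))) (n - 1) := by
      funext n; push_cast; ring_nf
    rw [he]; exact h

lemma periodic_sub {A : Type*} {y : ℤ → A} {k : ℕ} (hy : ∀ n : ℤ, y (n + (k : ℤ)) = y n) :
    ∀ (m : ℕ) (n : ℤ), y (n - (m : ℤ) * k) = y n := by
  intro m
  induction m with
  | zero => intro n; norm_num
  | succ m ih =>
    intro n
    have h1 : n - ((m + 1 : ℕ) : ℤ) * k = (n - k) - (m : ℤ) * k := by push_cast; ring
    rw [h1, ih (n - k)]
    have := hy (n - k)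
    exact (by simpa using this : y n = y (n - (k:ℤ))).symm

lemma leftper_sub {A : Type*} {x : ℤ → A} {k : ℕ}
    (hx : ∀ n : ℤ, n < (k : ℤ) → x n = x (n - k)) :
    ∀ (m : ℕ) (n : ℤ), n < (k : ℤ) → x n = x (n - (m : ℤ) * k) := by
  intro m
  induction m with
  | zero => intro n _; norm_num
  | succ m ih =>
    intro n hn
    have h1 : n - ((m + 1 : ℕ) : ℤ) * k = (n - (m : ℤ) * k) - k := by push_cast; ring
    have hnn : (0 : ℤ) ≤ (m : ℤ) * k := by positivity
    have h2 : n - (m : ℤ) * k < (k : ℤ) := by omega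
    rw [h1, ← hx _ h2]; exact ih n hn

lemma leftper_emod {A : Type*} {x : ℤ → A} {k : ℕ} (hk : 0 < k)
    (hx : ∀ n : ℤ, n < (k : ℤ) → x n = x (n - k)) :
    ∀ n : ℤ, n < (k : ℤ) → x n = x (n % (k : ℤ)) := by
  intro n hn
  have hk' : (0 : ℤ) < k := by exact_mod_cast hk
  have hdiv : n / (k : ℤ) ≤ 0 := by
    have : n / (k : ℤ) ≤ ((k : ℤ) - 1) / k := Int.ediv_le_ediv hk' (by omega)
    have h0 : ((k : ℤ) - 1) / k = 0 := Int.ediv_eq_zero_of_lt (by omega) (by omega)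
    omega
  set m : ℕ := (-(n / (k : ℤ))).toNat with hm
  have hmz : (m : ℤ) = -(n / (k : ℤ)) := Int.toNat_of_nonneg (by omega)
  have hmod : n % (k : ℤ) = n - (n / k) * k := by rw [Int.emod_def]; ring
  have hlt : n % (k : ℤ) < k := Int.emod_lt_of_pos n hk'
  have := leftper_sub hx m (n % (k : ℤ)) hlt
  have heq : n % (k : ℤ) - (m : ℤ) * k = n := by rw [hmz, hmod]; ring
  rw [heq] at this
  exact this.symm

lemma gcomm_aux {A : Type*} [TopologicalSpace A] {X : Set (ℤ → A)}
    (g : X ≃ₜ X) (hg : CommutesWithShift X g)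
    (v : ℤ → A) (hv : v ∈ X) (hbv : (fun n : ℤ => v (n - 1)) ∈ X) :
    ((g ⟨fun n : ℤ => v (n - 1), hbv⟩ : X) : ℤ → A) = fun n => ((g ⟨v, hv⟩ : X) : ℤ → A) (n - 1) := by
  have hs : shift (fun n : ℤ => v (n - 1)) ∈ X := by
    have : shift (fun n : ℤ => v (n - 1)) = v := by funext n; simp [shift]
    rw [this]; exact hv
  have h := hg ⟨fun n : ℤ => v (n - 1), hbv⟩ hs
  have hsv : (⟨shift (fun n : ℤ => v (n - 1)), hs⟩ : X) = ⟨v, hv⟩ := by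
    apply Subtype.ext; funext n; simp [shift]
  rw [hsv] at h
  funext n
  have := congrFun h (n - 1)
  simp only [shift] at this
  rw [this]
  norm_num

lemma gcomm {A : Type*} [TopologicalSpace A] {X : Set (ℤ → A)}
    (hinv' : ∀ x ∈ X, (fun n : ℤ => x (n - 1)) ∈ X)
    (g : X ≃ₜ X) (hg : CommutesWithShift X g) :
    ∀ (m : ℕ) (w : ℤ → A) (hw : w ∈ X),
      ((g ⟨fun n : ℤ => w (n - (m : ℤ)), mem_shift_nat hinv' m w hw⟩ : X) : ℤ → A)
        = fun n => ((g ⟨w, hw⟩ : X) : ℤ → A) (n - (m : ℤ)) := by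
  intro m
  induction m with
  | zero =>
    intro w hw
    have he : (fun n : ℤ => w (n - ((0:ℕ) : ℤ))) = w := by funext n; norm_num
    have : (⟨fun n : ℤ => w (n - ((0:ℕ) : ℤ)), mem_shift_nat hinv' 0 w hw⟩ : X) = ⟨w, hw⟩ :=
      Subtype.ext he
    rw [this]; funext n; norm_num
  | succ m ih =>
    intro w hw
    set v : ℤ → A := fun n : ℤ => w (n - (m : ℤ)) with hvdef
    have hv : v ∈ X := mem_shift_nat hinv' m w hw
    have hbv : (fun n : ℤ => v (n - 1)) ∈ X := hinv' v hv
    have he : (fun n : ℤ => w (n - ((m + 1 : ℕ) : ℤ))) = fun n : ℤ => v (n - 1) := by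
      funext n; simp only [hvdef]; push_cast; ring_nf
    have hsub : (⟨fun n : ℤ => w (n - ((m + 1 : ℕ) : ℤ)), mem_shift_nat hinv' (m+1) w hw⟩ : X)
        = ⟨fun n : ℤ => v (n - 1), hbv⟩ := Subtype.ext he
    rw [hsub, gcomm_aux g hg v hv hbv, ih w hw]
    funext n; push_cast; ring_nf

open Filter Topology

/-- The projection `π : Q_k → Per_k/⟨σ⟩` is well-defined (every `x ∈ Q_k` determines a
unique `k`-periodic point of `X` agreeing with it below index `k`) and
`Aut(X)`-equivariant (the `k`-periodic point shadowing `g x` lies in the `σ`-orbit of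
the image under `g` of the `k`-periodic point shadowing `x`). -/
theorem stmt11 {A : Type*} [Fintype A] [TopologicalSpace A] [DiscreteTopology A]
    (X : Set (ℤ → A)) (hcl : IsClosed X)
    (hinv : ∀ x ∈ X, shift x ∈ X) (hinv' : ∀ x ∈ X, (fun n : ℤ => x (n - 1)) ∈ X)
    (k : ℕ) (hk : 0 < k) :
    (∀ x ∈ Qset X k, ∃! y : ℤ → A,
      y ∈ X ∧ (∀ n : ℤ, y (n + k) = y n) ∧ ∀ n : ℤ, n < k → y n = x n) ∧
    (∀ g : X ≃ₜ X, CommutesWithShift X g →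
      ∀ (x : ℤ → A) (hx : x ∈ Qset X k) (y : ℤ → A)
        (hy : y ∈ X ∧ (∀ n : ℤ, y (n + k) = y n) ∧ ∀ n : ℤ, n < k → y n = x n)
        (y' : ℤ → A),
        (y' ∈ X ∧ (∀ n : ℤ, y' (n + k) = y' n) ∧
          ∃ M : ℤ, ∀ n : ℤ, n < M → y' n = ((g ⟨x, hx.1⟩ : X) : ℤ → A) n) →
        ∃ i : ℤ, y' = shiftIter i ((g ⟨y, hy.1⟩ : X) : ℤ → A)) := by
  have hk' : (1 : ℤ) ≤ (k : ℤ) := by exact_mod_cast hk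
  constructor
  · intro x hx
    obtain ⟨hxX, hper, -, -⟩ := hx
    set y : ℤ → A := fun n => x (n % (k : ℤ)) with hydef
    have hagree : ∀ n : ℤ, n < (k : ℤ) → y n = x n :=
      fun n hn => (leftper_emod hk hper n hn).symm
    have hyper : ∀ n : ℤ, y (n + (k : ℤ)) = y n := by
      intro n
      simp only [hydef]
      rw [show n + (k:ℤ) = n + 1 * k by ring, Int.add_mul_emod_self_right]
    have hzmem : ∀ m : ℕ, (fun n : ℤ => x (n - ((m * k : ℕ) : ℤ))) ∈ X :=
      fun m => mem_shift_nat hinv' (m * k) x hxX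
    have hmklarge : ∀ (n : ℤ) (m : ℕ), n.natAbs + 1 ≤ m → n - ((m * k : ℕ) : ℤ) < (k : ℤ) := by
      intro n m hm
      have h1 : (m : ℤ) ≤ ((m * k : ℕ) : ℤ) := by
        exact_mod_cast Nat.le_mul_of_pos_right m hk
      have h2 : ((n.natAbs + 1 : ℕ) : ℤ) ≤ (m : ℤ) := by exact_mod_cast hm
      have h3 : n ≤ (n.natAbs : ℤ) := Int.le_natAbs
      push_cast at h2
      omega
    have hmod : ∀ (n : ℤ) (m : ℕ), (n - ((m * k : ℕ) : ℤ)) % (k : ℤ) = n % (k : ℤ) := by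
      intro n m
      push_cast
      rw [show n - (m : ℤ) * k = n + (-(m : ℤ)) * k by ring, Int.add_mul_emod_self_right]
    have htend : Tendsto (fun m : ℕ => fun n : ℤ => x (n - ((m * k : ℕ) : ℤ)))
        atTop (𝓝 y) := by
      rw [tendsto_pi_nhds]
      intro n
      apply tendsto_const_nhds.congr'
      filter_upwards [Filter.eventually_ge_atTop (n.natAbs + 1)] with m hm
      have hlt := hmklarge n m hm
      rw [leftper_emod hk hper _ hlt, hmod]
    have hmem : y ∈ X := hcl.mem_of_tendsto htend (Filter.Eventually.of_forall hzmem)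
    refine ⟨y, ⟨hmem, hyper, hagree⟩, ?_⟩
    rintro y2 ⟨-, h2, h3⟩
    funext n
    have hmm : ((n.natAbs + 1 : ℕ) : ℤ) * k = (((n.natAbs + 1) * k : ℕ) : ℤ) := by push_cast; ring
    have hlt : n - (((n.natAbs + 1) * k : ℕ) : ℤ) < (k : ℤ) := hmklarge n _ le_rfl
    have hm' := periodic_sub h2 (n.natAbs + 1) n
    rw [hmm] at hm'
    rw [← hm', h3 _ hlt, leftper_emod hk hper _ hlt, hmod]
  · intro g hg x hx y hy y' hy'
    obtain ⟨hy'X, hy'per, M, hM⟩ := hy'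
    refine ⟨0, ?_⟩
    have hmklarge : ∀ (N n : ℤ) (m : ℕ), (n - N).natAbs + 1 ≤ m →
        n - ((m * k : ℕ) : ℤ) < N := by
      intro N n m hm
      have h1 : (m : ℤ) ≤ ((m * k : ℕ) : ℤ) := by
        exact_mod_cast Nat.le_mul_of_pos_right m hk
      have h2 : (((n - N).natAbs + 1 : ℕ) : ℤ) ≤ (m : ℤ) := by exact_mod_cast hm
      have h3 : n - N ≤ ((n - N).natAbs : ℤ) := Int.le_natAbs
      push_cast at h2
      omega
    have hpersub : ∀ (w : ℤ → A), (∀ n : ℤ, w (n + (k : ℤ)) = w n) →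
        ∀ (m : ℕ) (n : ℤ), w (n - ((m * k : ℕ) : ℤ)) = w n := by
      intro w hw m n
      have hmm : (((m * k : ℕ)) : ℤ) = (m : ℤ) * k := by push_cast; ring
      rw [hmm]
      exact periodic_sub hw m n
    set z : ℕ → X := fun m =>
      ⟨fun n : ℤ => x (n - ((m * k : ℕ) : ℤ)), mem_shift_nat hinv' (m * k) x hx.1⟩ with hzdef
    have hztendval : Tendsto (fun m : ℕ => ((z m : X) : ℤ → A)) atTop (𝓝 y) := by
      rw [tendsto_pi_nhds]
      intro n
      apply tendsto_const_nhds.congr'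
      filter_upwards [Filter.eventually_ge_atTop ((n - (k : ℤ)).natAbs + 1)] with m hm
      have hlt : n - ((m * k : ℕ) : ℤ) < (k : ℤ) := by
        have := hmklarge (k : ℤ) n m hm
        omega
      have := hy.2.2 _ hlt
      show y n = x (n - ((m * k : ℕ) : ℤ))
      rw [← this, hpersub y hy.2.1]
    have hztend : Tendsto z atTop (𝓝 (⟨y, hy.1⟩ : X)) := tendsto_subtype_rng.mpr hztendval
    have h1 : Tendsto (fun m => ((g (z m) : X) : ℤ → A)) atTop
        (𝓝 ((g ⟨y, hy.1⟩ : X) : ℤ → A)) :=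
      (continuous_subtype_val.tendsto _).comp ((g.continuous.tendsto _).comp hztend)
    have hgz : ∀ m : ℕ, ((g (z m) : X) : ℤ → A)
        = fun n => ((g ⟨x, hx.1⟩ : X) : ℤ → A) (n - ((m * k : ℕ) : ℤ)) :=
      fun m => gcomm hinv' g hg (m * k) x hx.1
    have h2 : Tendsto (fun m => ((g (z m) : X) : ℤ → A)) atTop (𝓝 y') := by
      rw [tendsto_pi_nhds]
      intro n
      apply tendsto_const_nhds.congr'
      filter_upwards [Filter.eventually_ge_atTop ((n - M).natAbs + 1)] with m hm
      have hlt : n - ((m * k : ℕ) : ℤ) < M := hmklarge M n m hm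
      rw [hgz m]
      show y' n = ((g ⟨x, hx.1⟩ : X) : ℤ → A) (n - ((m * k : ℕ) : ℤ))
      rw [← hM _ hlt, hpersub y' hy'per]
    have key : ((g ⟨y, hy.1⟩ : X) : ℤ → A) = y' := tendsto_nhds_unique h1 h2
    rw [key]
    funext n
    simp [shiftIter]
end

section
/- Let G be a group acting on compact G-spaces, and suppose Ω is a G-boundary (the action is minimal and strongly proximal). Then every amenable normal subgroup A ◁ G acts trivially on Ω, i.e., A is contained in the kernel of G → Homeo(Ω). -/
open MeasureTheory

def StronglyProximal (G Ω : Type*) [Group G] [TopologicalSpace Ω] [MeasurableSpace Ω]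
    [OpensMeasurableSpace Ω] [MulAction G Ω] : Prop :=
  ∀ μ : ProbabilityMeasure Ω, ∃ ω : Ω,
    (⟨Measure.dirac ω, inferInstance⟩ : ProbabilityMeasure Ω) ∈
      closure {ν : ProbabilityMeasure Ω | ∃ g : G,
        (ν : Measure Ω) = (μ : Measure Ω).map (fun ω' => g • ω')}

universe u

/-- If `Ω` is a `G`-boundary (minimal and strongly proximal), every amenable normal
subgroup `H ◁ G` acts trivially on `Ω`.  Amenability of `H` is taken in the fixed-point
formulation: every continuous `H`-action on a nonempty compact space admits an
invariant Borel probability measure. -/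
theorem stmt17 {G : Type*} [Group G] {Ω : Type u}
    [MetricSpace Ω] [CompactSpace Ω] [Nonempty Ω]
    [MeasurableSpace Ω] [BorelSpace Ω] [MulAction G Ω]
    (hc : ∀ g : G, Continuous fun ω : Ω => g • ω)
    (hmin : ∀ ω : Ω, Dense (MulAction.orbit G ω))
    (hsp : StronglyProximal G Ω)
    (H : Subgroup G) (hn : H.Normal)
    (hamen : ∀ (Y : Type u) [TopologicalSpace Y] [CompactSpace Y] [MeasurableSpace Y]
      [BorelSpace Y] [Nonempty Y] [MulAction H Y],
      (∀ a : H, Continuous fun y : Y => a • y) →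
      ∃ μ : ProbabilityMeasure Y, ∀ a : H,
        (μ : Measure Y).map (fun y : Y => a • y) = (μ : Measure Y)) :
    ∀ a ∈ H, ∀ ω : Ω, a • ω = ω := by
  -- An H-invariant probability measure on Ω
  obtain ⟨μ, hμ⟩ := hamen Ω (fun a => hc (a : G))
  simp only [Subgroup.smul_def] at hμ
  obtain ⟨ω₀, hω₀⟩ := hsp μ
  -- The set of H-invariant probability measures
  set C : Set (ProbabilityMeasure Ω) :=
    {ν | ∀ a : H, ν.map (hc (a : G)).measurable.aemeasurable = ν} with hC
  have hCclosed : IsClosed C := by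
    have : C = ⋂ a : H, {ν | ν.map (hc (a : G)).measurable.aemeasurable = ν} := by
      ext ν; simp [hC, Set.mem_iInter]
    rw [this]
    exact isClosed_iInter fun a =>
      isClosed_eq (ProbabilityMeasure.continuous_map (hc (a : G))) continuous_id
  -- all G-translates of μ lie in C
  have hSC : {ν : ProbabilityMeasure Ω | ∃ g : G,
      (ν : Measure Ω) = (μ : Measure Ω).map (fun ω' => g • ω')} ⊆ C := by
    rintro ν ⟨g, hg⟩ a
    apply ProbabilityMeasure.toMeasure_injective
    rw [ProbabilityMeasure.toMeasure_map, hg,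
      Measure.map_map (hc (a : G)).measurable (hc g).measurable]
    have key : ((fun ω' : Ω => (a : G) • ω') ∘ fun ω' => g • ω')
        = (fun ω' : Ω => g • ω') ∘ (fun ω' => (g⁻¹ * (a : G) * g) • ω') := by
      funext ω'
      simp [Function.comp, smul_smul, mul_assoc]
    rw [key, ← Measure.map_map (hc g).measurable (hc (g⁻¹ * (a : G) * g)).measurable]
    have hmem : g⁻¹ * (a : G) * g ∈ H := by
      simpa using hn.conj_mem (a : G) a.2 g⁻¹
    rw [hμ ⟨g⁻¹ * (a : G) * g, hmem⟩]
  -- the Dirac measure at ω₀ is H-invariant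
  have hdirac : (⟨Measure.dirac ω₀, inferInstance⟩ : ProbabilityMeasure Ω) ∈ C :=
    hCclosed.closure_subset_iff.mpr hSC hω₀
  have hfix : ∀ a : H, (a : G) • ω₀ = ω₀ := by
    intro a
    have h1 := congrArg ProbabilityMeasure.toMeasure (hdirac a)
    change _ = _ at h1
    have h2 : Measure.map (fun ω : Ω => (a : G) • ω) (Measure.dirac ω₀) = Measure.dirac ω₀ := h1
    rw [Measure.map_dirac' (hc (a : G)).measurable] at h2
    exact MeasureTheory.dirac_eq_dirac_iff.mp h2
  -- the fixed-point set of H is closed and G-invariant, hence all of Ω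
  intro a ha ω
  set F : Set Ω := {ω | ∀ b : H, (b : G) • ω = ω} with hF
  have hFclosed : IsClosed F := by
    have : F = ⋂ b : H, {ω | (b : G) • ω = ω} := by
      ext ω; simp [hF, Set.mem_iInter]
    rw [this]
    exact isClosed_iInter fun b => isClosed_eq (hc (b : G)) continuous_id
  have horb : MulAction.orbit G ω₀ ⊆ F := by
    rintro _ ⟨g, rfl⟩ b
    have hmem : g⁻¹ * (b : G) * g ∈ H := by
      simpa using hn.conj_mem (b : G) b.2 g⁻¹
    have := hfix ⟨g⁻¹ * (b : G) * g, hmem⟩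
    simp only [Subgroup.coe_mk] at this
    calc (b : G) • g • ω₀ = g • (g⁻¹ * (b : G) * g) • ω₀ := by
          simp [smul_smul, mul_assoc]
      _ = g • ω₀ := by rw [this]
  have hωF : ω ∈ F := by
    have : closure (MulAction.orbit G ω₀) ⊆ F := hFclosed.closure_subset_iff.mpr horb
    exact this ((hmin ω₀).closure_eq ▸ Set.mem_univ ω : ω ∈ closure (MulAction.orbit G ω₀))
  exact hωF ⟨a, ha⟩
end
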